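/- Let d ≥ 1 and let A, B ⊂ ℝ^d be compact convex sets with nonempty interior. Let f : A → ℝ, g : B → ℝ, and h : A + B → ℝ be continuous convex functions with f ≤ 0, g ≤ 0, h ≤ 0, and suppose h(x + y) ≤ f(x) + g(y) for all x ∈ A and y ∈ B, where A + B denotes the Minkowski sum. Then (∫_{A+B} (−h) dx)^{1/(d+1)} ≥ (∫_A (−f) dx)^{1/(d+1)} + (∫_B (−g) dx)^{1/(d+1)}. -/

import Mathlib

open MeasureTheory Pointwise Set
open scoped ENNReal NNReal


lemma sumset_compact (K L : Set ℝ) (hK : IsCompact K) (hL : IsCompact L)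
    (hKne : K.Nonempty) (hLne : L.Nonempty) :
    volume K + volume L ≤ volume (K + L) := by
  obtain ⟨a, haK, ha⟩ := hK.exists_isMaxOn hKne continuousOn_id
  obtain ⟨b, hbL, hb⟩ := hL.exists_isMinOn hLne continuousOn_id
  set X : Set ℝ := (· + b) '' K with hX
  set Y : Set ℝ := (a + ·) '' L with hY
  have hXsub : X ⊆ K + L := by
    rintro _ ⟨x, hx, rfl⟩; exact add_mem_add hx hbL
  have hYsub : Y ⊆ K + L := by
    rintro _ ⟨y, hy, rfl⟩; exact add_mem_add haK hy
  have hXY : X ∩ Y ⊆ {a + b} := by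
    rintro z ⟨⟨x, hx, rfl⟩, ⟨y, hy, hxy⟩⟩
    have h1 : x ≤ a := ha hx
    have h2 : b ≤ y := hb hy
    have : x + b ≤ a + b := by linarith
    have : a + b ≤ a + y := by linarith
    have hxy' : a + y = x + b := hxy
    simp only [mem_singleton_iff]
    linarith
  have hXm : MeasurableSet X := by
    have : X = (· + (-b)) ⁻¹' K := by
      ext z
      constructor
      · rintro ⟨x, hx, rfl⟩; simpa using hx
      · intro hz; exact ⟨z - b, by simpa [sub_eq_add_neg] using hz, by ring⟩
    rw [this]; exact hK.measurableSet.preimage (measurable_add_const _)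
  have hYm : MeasurableSet Y := by
    have : Y = ((-a) + ·) ⁻¹' L := by
      ext z
      constructor
      · rintro ⟨y, hy, rfl⟩; simpa using hy
      · intro hz; exact ⟨-a + z, hz, by ring⟩
    rw [this]; exact hL.measurableSet.preimage (measurable_const_add _)
  have hvX : volume X = volume K := by
    rw [show X = (· + (-b)) ⁻¹' K from by
      ext z
      constructor
      · rintro ⟨x, hx, rfl⟩; simpa using hx
      · intro hz; exact ⟨z - b, by simpa [sub_eq_add_neg] using hz, by ring⟩]
    exact measure_preimage_add_right volume (-b) K
  have hvY : volume Y = volume L := by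
    rw [show Y = ((-a) + ·) ⁻¹' L from by
      ext z
      constructor
      · rintro ⟨y, hy, rfl⟩; simpa using hy
      · intro hz; exact ⟨-a + z, hz, by ring⟩]
    exact measure_preimage_add volume (-a) L
  calc volume K + volume L = volume X + volume Y := by rw [hvX, hvY]
    _ = volume (X ∪ Y) + volume (X ∩ Y) := (measure_union_add_inter' hXm Y).symm
    _ ≤ volume (K + L) + volume ({a + b} : Set ℝ) :=
        add_le_add (measure_mono (union_subset hXsub hYsub)) (measure_mono hXY)
    _ = volume (K + L) := by simp

lemma sumset_one_dim (S T : Set ℝ) (hS : MeasurableSet S) (hT : MeasurableSet T)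
    (hSne : S.Nonempty) (hTne : T.Nonempty) :
    volume S + volume T ≤ volume (S + T) := by
  obtain ⟨s₀, hs₀⟩ := hSne
  obtain ⟨t₀, ht₀⟩ := hTne
  rcases eq_or_ne (volume S) ∞ with hSinf | hSfin
  · have : volume (S + T) = ∞ := by
      refine eq_top_iff.2 ?_
      rw [← hSinf]
      refine le_trans (le_of_eq ?_) (measure_mono (?_ : (· + t₀) '' S ⊆ S + T))
      · rw [show (· + t₀) '' S = (· + (-t₀)) ⁻¹' S from by
          ext z
          constructor
          · rintro ⟨x, hx, rfl⟩; simpa using hx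
          · intro hz; exact ⟨z - t₀, by simpa [sub_eq_add_neg] using hz, by ring⟩]
        exact (measure_preimage_add_right volume (-t₀) S).symm
      · rintro _ ⟨x, hx, rfl⟩; exact add_mem_add hx ht₀
    simp [this]
  rcases eq_or_ne (volume T) ∞ with hTinf | hTfin
  · have : volume (S + T) = ∞ := by
      refine eq_top_iff.2 ?_
      rw [← hTinf]
      refine le_trans (le_of_eq ?_) (measure_mono (?_ : (s₀ + ·) '' T ⊆ S + T))
      · rw [show (s₀ + ·) '' T = ((-s₀) + ·) ⁻¹' T from by
          ext z
          constructor
          · rintro ⟨y, hy, rfl⟩; simpa using hy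
          · intro hz; exact ⟨-s₀ + z, hz, by ring⟩]
        exact (measure_preimage_add volume (-s₀) T).symm
      · rintro _ ⟨y, hy, rfl⟩; exact add_mem_add hs₀ hy
    simp [this]
  refine ENNReal.le_of_forall_pos_le_add fun ε hε _ => ?_
  have hε2 : (0 : ℝ≥0∞) < (ε : ℝ≥0∞) / 2 :=
    ENNReal.div_pos (by exact_mod_cast hε.ne') (by norm_num)
  obtain ⟨K, hKS, hKc, hKv⟩ := hS.exists_isCompact_lt_add hSfin hε2.ne'
  obtain ⟨L, hLT, hLc, hLv⟩ := hT.exists_isCompact_lt_add hTfin hε2.ne'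
  have hK' : IsCompact (K ∪ {s₀}) := hKc.union isCompact_singleton
  have hL' : IsCompact (L ∪ {t₀}) := hLc.union isCompact_singleton
  have hKS' : K ∪ {s₀} ⊆ S := union_subset hKS (by simpa using hs₀)
  have hLT' : L ∪ {t₀} ⊆ T := union_subset hLT (by simpa using ht₀)
  have key := sumset_compact _ _ hK' hL' (by simp) (by simp)
  calc volume S + volume T
      ≤ (volume (K ∪ {s₀}) + ε / 2) + (volume (L ∪ {t₀}) + ε / 2) := by
        gcongr
        · exact le_trans hKv.le (by gcongr; exact subset_union_left)
        · exact le_trans hLv.le (by gcongr; exact subset_union_left)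
    _ = volume (K ∪ {s₀}) + volume (L ∪ {t₀}) + ε := by
        rw [add_assoc, add_comm ((ε : ℝ≥0∞) / 2), add_assoc, ENNReal.add_halves, add_assoc]
    _ ≤ volume ((K ∪ {s₀}) + (L ∪ {t₀})) + ε := add_le_add_left key _
    _ ≤ volume (S + T) + ε :=
        add_le_add_left (measure_mono (add_subset_add hKS' hLT')) _


lemma ennreal_amgm {l : ℝ} (hl0 : 0 < l) (hl1 : l < 1) (x y : ℝ≥0∞) :
    x ^ (1 - l) * y ^ l ≤ ENNReal.ofReal (1 - l) * x + ENNReal.ofReal l * y := by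
  have h1l : (0:ℝ) < 1 - l := by linarith
  rcases eq_or_ne x 0 with rfl | hx0
  · simp [ENNReal.zero_rpow_of_pos h1l]
  rcases eq_or_ne y 0 with rfl | hy0
  · simp [ENNReal.zero_rpow_of_pos hl0]
  rcases eq_or_ne x ⊤ with rfl | hx
  · have h2 : ENNReal.ofReal (1 - l) * ⊤ = ⊤ := by
      simp [ENNReal.mul_top, (ENNReal.ofReal_pos.2 h1l).ne']
    rw [h2]
    exact le_top.trans_eq (by simp)
  rcases eq_or_ne y ⊤ with rfl | hy
  · have h2 : ENNReal.ofReal l * ⊤ = ⊤ := by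
      simp [ENNReal.mul_top, (ENNReal.ofReal_pos.2 hl0).ne']
    rw [h2]
    exact le_top.trans_eq (by simp)
  lift x to ℝ≥0 using hx
  lift y to ℝ≥0 using hy
  have key := NNReal.geom_mean_le_arith_mean2_weighted ((1 - l).toNNReal) (l.toNNReal) x y
    (by rw [← Real.toNNReal_add h1l.le hl0.le]; norm_num)
  rw [Real.coe_toNNReal _ h1l.le, Real.coe_toNNReal _ hl0.le] at key
  calc (x : ℝ≥0∞) ^ (1 - l) * (y : ℝ≥0∞) ^ l
      = ((x ^ (1 - l) * y ^ l : ℝ≥0) : ℝ≥0∞) := by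
        rw [ENNReal.coe_mul, ENNReal.coe_rpow_of_nonneg _ h1l.le,
          ENNReal.coe_rpow_of_nonneg _ hl0.le]
    _ ≤ (((1 - l).toNNReal * x + l.toNNReal * y : ℝ≥0) : ℝ≥0∞) := ENNReal.coe_le_coe.2 key
    _ = ENNReal.ofReal (1 - l) * x + ENNReal.ofReal l * y := by
        rw [ENNReal.coe_add, ENNReal.coe_mul, ENNReal.coe_mul]; rfl

section slices
variable {χ : ℝ → ℝ≥0∞}

lemma slice_swap (hχ : Measurable χ) (C k : ℝ) :
    ∫⁻ t in Ioo (0:ℝ) C, volume {u | ENNReal.ofReal (k * t) < χ u}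
      = ∫⁻ u, volume (Ioo (0:ℝ) C ∩ {t | ENNReal.ofReal (k * t) < χ u}) := by
  set S : Set (ℝ × ℝ) := {p | ENNReal.ofReal (k * p.1) < χ p.2} with hS
  have hset : MeasurableSet S := by
    apply measurableSet_lt
    · exact ENNReal.measurable_ofReal.comp ((measurable_const_mul k).comp measurable_fst)
    · exact hχ.comp measurable_snd
  set F : ℝ → ℝ → ℝ≥0∞ := fun t u => S.indicator 1 (t, u) with hF
  have hunc : Function.uncurry F = S.indicator 1 := by
    funext p; rfl
  have h1 : ∀ t, volume {u | ENNReal.ofReal (k * t) < χ u} = ∫⁻ u, F t u := by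
    intro t
    have : F t = ({u | ENNReal.ofReal (k * t) < χ u}).indicator 1 := by
      funext u
      by_cases hu : ENNReal.ofReal (k * t) < χ u <;> simp [hF, hS, indicator, hu]
    rw [this, lintegral_indicator_one]
    exact measurableSet_lt measurable_const hχ
  have h2 : ∀ u, volume (Ioo (0:ℝ) C ∩ {t | ENNReal.ofReal (k * t) < χ u})
      = ∫⁻ t in Ioo (0:ℝ) C, F t u := by
    intro u
    have : (fun t => F t u) = ({t | ENNReal.ofReal (k * t) < χ u}).indicator 1 := by
      funext t
      by_cases ht : ENNReal.ofReal (k * t) < χ u <;> simp [hF, hS, indicator, ht]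
    have hT : MeasurableSet {t : ℝ | ENNReal.ofReal (k * t) < χ u} :=
      measurableSet_lt (ENNReal.measurable_ofReal.comp (measurable_const_mul k)) measurable_const
    rw [this, lintegral_indicator_one hT, Measure.restrict_apply hT, inter_comm]
  simp_rw [h1, h2]
  exact lintegral_lintegral_swap (by rw [hunc]; exact (measurable_one.indicator hset).aemeasurable)

lemma slice_le (hχ : Measurable χ) {C : ℝ} (hC : 0 < C) :
    ∫⁻ t in Ioo (0:ℝ) C, volume {u | ENNReal.ofReal t < χ u} ≤ ∫⁻ u, χ u := by
  have := slice_swap hχ C 1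
  simp_rw [one_mul] at this
  rw [this]
  refine lintegral_mono fun u => ?_
  rcases eq_or_ne (χ u) ⊤ with h | h
  · simp [h]
  · refine le_trans (measure_mono (?_ : _ ⊆ Ioo 0 (χ u).toReal)) ?_
    · rintro t ⟨⟨ht0, _⟩, ht⟩
      exact ⟨ht0, (ENNReal.ofReal_lt_iff_lt_toReal ht0.le h).1 ht⟩
    · rw [Real.volume_Ioo, sub_zero]
      exact ENNReal.ofReal_toReal_le

lemma slice_eq {f : ℝ → ℝ≥0∞} (hf : Measurable f) {C k : ℝ} (hC : 0 < C) (hk : 0 < k)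
    (hbd : ∀ s, f s ≤ ENNReal.ofReal (k * C)) :
    ∫⁻ t in Ioo (0:ℝ) C, volume {u | ENNReal.ofReal (k * t) < f u}
      = ENNReal.ofReal k⁻¹ * ∫⁻ u, f u := by
  rw [slice_swap hf C k, ← lintegral_const_mul _ hf]
  congr 1
  funext u
  have hfin : f u ≠ ⊤ := (hbd u).trans_lt ENNReal.ofReal_lt_top |>.ne
  have hue : Ioo (0:ℝ) C ∩ {t | ENNReal.ofReal (k * t) < f u}
      = Ioo 0 ((f u).toReal / k) := by
    ext t
    simp only [mem_inter_iff, mem_Ioo, mem_setOf_eq]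
    constructor
    · rintro ⟨⟨ht0, htC⟩, ht⟩
      have : k * t < (f u).toReal :=
        (ENNReal.ofReal_lt_iff_lt_toReal (by positivity) hfin).1 ht
      exact ⟨ht0, (lt_div_iff₀ hk).2 (by linarith [this])⟩
    · rintro ⟨ht0, ht⟩
      have h1 : k * t < (f u).toReal := by
        have := (lt_div_iff₀ hk).1 ht
        linarith [mul_comm t k]
      have h2 : (f u).toReal ≤ k * C := by
        have := hbd u
        calc (f u).toReal ≤ (ENNReal.ofReal (k * C)).toReal := ENNReal.toReal_mono (by simp) this
          _ = k * C := ENNReal.toReal_ofReal (by positivity)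
      have h3 : (f u).toReal / k ≤ C := by rw [div_le_iff₀ hk]; linarith [mul_comm C k]
      refine ⟨⟨ht0, ?_⟩, ?_⟩
      · linarith
      · rw [← ENNReal.ofReal_toReal hfin]
        have : 0 < k * t := mul_pos hk ht0
        exact ENNReal.ofReal_lt_ofReal_iff (by linarith) |>.2 h1
  rw [hue, Real.volume_Ioo, sub_zero, div_eq_inv_mul,
    ENNReal.ofReal_mul (inv_nonneg.2 hk.le), ENNReal.ofReal_toReal hfin]


lemma PL_one {l : ℝ} (hl0 : 0 < l) (hl1 : l < 1) (φ ψ χ : ℝ → ℝ≥0∞)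
    (hφ : Measurable φ) (hψ : Measurable ψ) (hχ : Measurable χ)
    (hφbdd : (⨆ s, φ s) ≠ ⊤) (hψbdd : (⨆ t, ψ t) ≠ ⊤)
    (hcond : ∀ s t, φ s ^ (1 - l) * ψ t ^ l ≤ χ ((1 - l) * s + l * t)) :
    (∫⁻ s, φ s) ^ (1 - l) * (∫⁻ t, ψ t) ^ l ≤ ∫⁻ u, χ u := by
  have h1l : (0:ℝ) < 1 - l := by linarith
  set a := ⨆ s, φ s with ha
  set b := ⨆ t, ψ t with hb
  rcases eq_or_ne a 0 with ha0 | ha0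
  · have : ∫⁻ s, φ s = 0 := by
      have hz : ∀ s, φ s = 0 := fun s => le_antisymm (le_trans (le_iSup φ s) ha0.le) zero_le
      simp [hz]
    rw [this, ENNReal.zero_rpow_of_pos h1l, zero_mul]
    exact zero_le
  rcases eq_or_ne b 0 with hb0 | hb0
  · have : ∫⁻ t, ψ t = 0 := by
      have hz : ∀ t, ψ t = 0 := fun t => le_antisymm (le_trans (le_iSup ψ t) hb0.le) zero_le
      simp [hz]
    rw [this, ENNReal.zero_rpow_of_pos hl0, mul_zero]
    exact zero_le
  set A := a.toReal with hA
  set B := b.toReal with hB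
  have hApos : 0 < A := ENNReal.toReal_pos ha0 hφbdd
  have hBpos : 0 < B := ENNReal.toReal_pos hb0 hψbdd
  have haA : a = ENNReal.ofReal A := (ENNReal.ofReal_toReal hφbdd).symm
  have hbB : b = ENNReal.ofReal B := (ENNReal.ofReal_toReal hψbdd).symm
  set C := A ^ (1 - l) * B ^ l with hC
  have hCpos : 0 < C := mul_pos (Real.rpow_pos_of_pos hApos _) (Real.rpow_pos_of_pos hBpos _)
  -- key pointwise inequality
  have key : ∀ t ∈ Ioo (0:ℝ) C,
      ENNReal.ofReal (1 - l) * volume {s | ENNReal.ofReal (A / C * t) < φ s}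
        + ENNReal.ofReal l * volume {s | ENNReal.ofReal (B / C * t) < ψ s}
      ≤ volume {u | ENNReal.ofReal t < χ u} := by
    rintro t ⟨ht0, htC⟩
    set S := {s | ENNReal.ofReal (A / C * t) < φ s} with hSdef
    set T := {s | ENNReal.ofReal (B / C * t) < ψ s} with hTdef
    have hSm : MeasurableSet S := measurableSet_lt measurable_const hφ
    have hTm : MeasurableSet T := measurableSet_lt measurable_const hψ
    have hSne : S.Nonempty := by
      have hlt : ENNReal.ofReal (A / C * t) < a := by
        rw [haA]
        refine ENNReal.ofReal_lt_ofReal_iff hApos |>.2 ?_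
        calc A / C * t < A / C * C := by
              apply mul_lt_mul_of_pos_left htC (by positivity)
          _ = A := by field_simp
      obtain ⟨s, hs⟩ := lt_iSup_iff.1 hlt
      exact ⟨s, hs⟩
    have hTne : T.Nonempty := by
      have hlt : ENNReal.ofReal (B / C * t) < b := by
        rw [hbB]
        refine ENNReal.ofReal_lt_ofReal_iff hBpos |>.2 ?_
        calc B / C * t < B / C * C := by
              apply mul_lt_mul_of_pos_left htC (by positivity)
          _ = B := by field_simp
      obtain ⟨s, hs⟩ := lt_iSup_iff.1 hlt
      exact ⟨s, hs⟩
    have hsub : (1 - l) • S + l • T ⊆ {u | ENNReal.ofReal t < χ u} := by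
      rintro _ ⟨_, ⟨s, hs, rfl⟩, _, ⟨t', ht', rfl⟩, rfl⟩
      simp only [smul_eq_mul, mem_setOf_eq]
      have hreal : (A / C * t) ^ (1-l) * (B / C * t) ^ l = t := by
        rw [Real.mul_rpow (by positivity) ht0.le, Real.mul_rpow (by positivity) ht0.le,
          Real.div_rpow hApos.le hCpos.le, Real.div_rpow hBpos.le hCpos.le]
        rw [show A ^ (1-l) / C ^ (1-l) * t ^ (1-l) * (B ^ l / C ^ l * t ^ l)
            = (A ^ (1-l) * B ^ l) / (C ^ (1-l) * C ^ l) * (t ^ (1-l) * t ^ l) by ring]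
        rw [← Real.rpow_add hCpos, ← Real.rpow_add ht0]
        norm_num
        rw [← hC, div_self hCpos.ne']
        simp
      have h1 : ENNReal.ofReal t = ENNReal.ofReal (A / C * t) ^ (1 - l)
          * ENNReal.ofReal (B / C * t) ^ l := by
        rw [ENNReal.ofReal_rpow_of_pos (by positivity),
          ENNReal.ofReal_rpow_of_pos (by positivity),
          ← ENNReal.ofReal_mul (by positivity), hreal]
      rw [h1]
      have hx1fin : ENNReal.ofReal (A / C * t) ^ (1 - l) ≠ ⊤ := by
        exact ENNReal.rpow_ne_top_of_nonneg h1l.le ENNReal.ofReal_ne_top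
      have hx2pos : (0:ℝ≥0∞) < ENNReal.ofReal (B / C * t) ^ l :=
        ENNReal.rpow_pos (ENNReal.ofReal_pos.2 (by positivity)) ENNReal.ofReal_ne_top
      have hx2fin : ENNReal.ofReal (B / C * t) ^ l ≠ ⊤ :=
        ENNReal.rpow_ne_top_of_nonneg hl0.le ENNReal.ofReal_ne_top
      calc ENNReal.ofReal (A / C * t) ^ (1 - l) * ENNReal.ofReal (B / C * t) ^ l
          < φ s ^ (1 - l) * ENNReal.ofReal (B / C * t) ^ l := by
            refine ENNReal.mul_lt_mul_left hx2pos.ne' hx2fin ?_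
            exact ENNReal.rpow_lt_rpow hs h1l
        _ ≤ φ s ^ (1 - l) * ψ t' ^ l :=
            mul_le_mul_right (ENNReal.rpow_le_rpow ht'.le hl0.le) _
        _ ≤ χ ((1 - l) * s + l * t') := hcond s t'
    calc ENNReal.ofReal (1 - l) * volume S + ENNReal.ofReal l * volume T
        = volume ((1 - l) • S) + volume (l • T) := by
          rw [Measure.addHaar_smul volume (1 - l) S, Measure.addHaar_smul volume l T]
          simp [abs_of_pos h1l, abs_of_pos hl0]
      _ ≤ volume ((1 - l) • S + l • T) := by
          apply sumset_one_dim
          · exact hSm.const_smul_of_ne_zero (by exact_mod_cast h1l.ne')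
          · exact hTm.const_smul_of_ne_zero (by exact_mod_cast hl0.ne')
          · exact hSne.smul_set
          · exact hTne.smul_set
      _ ≤ volume {u | ENNReal.ofReal t < χ u} := measure_mono hsub
  -- integrate the key inequality over (0, C)
  have hφa : ∀ s, φ s ≤ ENNReal.ofReal (A / C * C) := by
    intro s
    rw [show A / C * C = A by field_simp, ← haA]
    exact le_iSup φ s
  have hψb : ∀ t, ψ t ≤ ENNReal.ofReal (B / C * C) := by
    intro t
    rw [show B / C * C = B by field_simp, ← hbB]
    exact le_iSup ψ t
  have int1 := slice_eq hφ hCpos (div_pos hApos hCpos) hφa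
  have int2 := slice_eq hψ hCpos (div_pos hBpos hCpos) hψb
  have int3 := slice_le hχ hCpos
  -- combine
  have main : ENNReal.ofReal (1 - l) * (ENNReal.ofReal (A / C)⁻¹ * ∫⁻ s, φ s)
      + ENNReal.ofReal l * (ENNReal.ofReal (B / C)⁻¹ * ∫⁻ t, ψ t) ≤ ∫⁻ u, χ u := by
    rw [← int1, ← int2]
    rw [← lintegral_const_mul' _ _ ENNReal.ofReal_ne_top,
      ← lintegral_const_mul' _ _ ENNReal.ofReal_ne_top]
    refine le_trans (le_lintegral_add _ _) (le_trans ?_ int3)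
    refine setLIntegral_mono' measurableSet_Ioo ?_
    exact key
  refine le_trans ?_ main
  -- algebra: LHS of PL ≤ the combination above
  have hIφ : ∫⁻ s, φ s = a * ((∫⁻ s, φ s) / a) := (ENNReal.mul_div_cancel ha0 hφbdd).symm
  have hIψ : ∫⁻ t, ψ t = b * ((∫⁻ t, ψ t) / b) := (ENNReal.mul_div_cancel hb0 hψbdd).symm
  calc (∫⁻ s, φ s) ^ (1 - l) * (∫⁻ t, ψ t) ^ l
      = (a * ((∫⁻ s, φ s) / a)) ^ (1 - l) * (b * ((∫⁻ t, ψ t) / b)) ^ l := by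
        rw [← hIφ, ← hIψ]
    _ = (a ^ (1-l) * b ^ l) * (((∫⁻ s, φ s) / a) ^ (1-l) * ((∫⁻ t, ψ t) / b) ^ l) := by
        rw [ENNReal.mul_rpow_of_nonneg _ _ h1l.le, ENNReal.mul_rpow_of_nonneg _ _ hl0.le]
        ring
    _ ≤ (a ^ (1-l) * b ^ l) * (ENNReal.ofReal (1-l) * ((∫⁻ s, φ s) / a)
          + ENNReal.ofReal l * ((∫⁻ t, ψ t) / b)) :=
        mul_le_mul_right (ennreal_amgm hl0 hl1 _ _) _
    _ = ENNReal.ofReal (1 - l) * (ENNReal.ofReal (A / C)⁻¹ * ∫⁻ s, φ s)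
          + ENNReal.ofReal l * (ENNReal.ofReal (B / C)⁻¹ * ∫⁻ t, ψ t) := by
        have hab : a ^ (1-l) * b ^ l = ENNReal.ofReal C := by
          rw [haA, hbB, ENNReal.ofReal_rpow_of_pos hApos, ENNReal.ofReal_rpow_of_pos hBpos,
            ← ENNReal.ofReal_mul (by positivity), hC]
        have h1 : ENNReal.ofReal C * ((∫⁻ s, φ s) / a) = ENNReal.ofReal (A/C)⁻¹ * ∫⁻ s, φ s := by
          rw [inv_div, haA, ENNReal.div_eq_inv_mul, ← mul_assoc,
            ENNReal.ofReal_div_of_pos hApos, ENNReal.div_eq_inv_mul, mul_comm (ENNReal.ofReal A)⁻¹]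
        have h2 : ENNReal.ofReal C * ((∫⁻ t, ψ t) / b) = ENNReal.ofReal (B/C)⁻¹ * ∫⁻ t, ψ t := by
          rw [inv_div, hbB, ENNReal.div_eq_inv_mul, ← mul_assoc,
            ENNReal.ofReal_div_of_pos hBpos, ENNReal.div_eq_inv_mul, mul_comm (ENNReal.ofReal B)⁻¹]
        rw [hab, mul_add, ← mul_assoc, ← mul_assoc, mul_comm (ENNReal.ofReal C),
          mul_comm (ENNReal.ofReal C), mul_assoc, mul_assoc, h1, h2]


lemma cons_combo {n : ℕ} (l : ℝ) (s t : ℝ) (x y : Fin n → ℝ) :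
    (1 - l) • (Fin.cons s x : Fin (n+1) → ℝ) + l • (Fin.cons t y : Fin (n+1) → ℝ)
      = (Fin.cons ((1 - l) * s + l * t) ((1 - l) • x + l • y) : Fin (n+1) → ℝ) := by
  funext i
  refine Fin.cases ?_ (fun j => ?_) i <;>
    simp [Pi.add_apply, Pi.smul_apply, smul_eq_mul]

lemma box_measurable (n : ℕ) (R : ℝ) :
    MeasurableSet {y : Fin n → ℝ | ∀ i, |y i| ≤ R} := by
  have : {y : Fin n → ℝ | ∀ i, |y i| ≤ R} = Set.pi univ fun _ => Icc (-R) R := by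
    ext y; rw [Set.mem_univ_pi]; simp [abs_le, mem_Icc]
  rw [this]
  exact MeasurableSet.univ_pi fun _ => measurableSet_Icc

lemma box_volume_lt_top (n : ℕ) (R : ℝ) :
    volume {y : Fin n → ℝ | ∀ i, |y i| ≤ R} < ⊤ := by
  have : {y : Fin n → ℝ | ∀ i, |y i| ≤ R} = Set.pi univ fun _ => Icc (-R) R := by
    ext y; rw [Set.mem_univ_pi]; simp [abs_le, mem_Icc]
  rw [this, volume_pi_pi]
  simp only [Real.volume_Icc]
  exact ENNReal.prod_lt_top fun i _ => ENNReal.ofReal_lt_top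

theorem PL_pi : ∀ (n : ℕ) {l : ℝ}, 0 < l → l < 1 →
    ∀ (f g h : (Fin n → ℝ) → ℝ≥0∞), Measurable f → Measurable g → Measurable h →
    ∀ (C : ℝ≥0∞), C ≠ ⊤ → ∀ (R : ℝ),
    (∀ x, f x ≤ C) → (∀ x, g x ≤ C) →
    (∀ x, f x ≠ 0 → ∀ i, |x i| ≤ R) → (∀ x, g x ≠ 0 → ∀ i, |x i| ≤ R) →
    (∀ x y, f x ^ (1 - l) * g y ^ l ≤ h ((1 - l) • x + l • y)) →
    (∫⁻ x, f x) ^ (1 - l) * (∫⁻ y, g y) ^ l ≤ ∫⁻ z, h z := by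
  intro n
  induction n with
  | zero =>
    intro l hl0 hl1 f g h hf hg hh C hC R hfC hgC hfR hgR hcond
    have huniv : (volume : Measure (Fin 0 → ℝ)) univ = 1 := by
      rw [volume_pi, Measure.pi_univ]; simp
    have hint : ∀ k : (Fin 0 → ℝ) → ℝ≥0∞, ∫⁻ x, k x = k default := by
      intro k
      rw [show k = fun _ => k default from funext fun x => by
        rw [Subsingleton.elim x default], lintegral_const, huniv, mul_one]
    rw [hint f, hint g, hint h]
    have := hcond default default
    rwa [Subsingleton.elim ((1 - l) • (default : Fin 0 → ℝ) + l • default) default] at this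
  | succ n ih =>
    intro l hl0 hl1 f g h hf hg hh C hC R hfC hgC hfR hgR hcond
    have h1l : (0:ℝ) < 1 - l := by linarith
    set e := MeasurableEquiv.piFinSuccAbove (fun _ : Fin (n+1) => ℝ) 0 with he
    have hsymm : ∀ (s : ℝ) (x : Fin n → ℝ), e.symm (s, x) = (Fin.cons s x : Fin (n+1) → ℝ) := by
      intro s x
      show (Fin.insertNthEquiv (fun _ => ℝ) 0) (s, x) = Fin.cons s x
      simp [Fin.insertNthEquiv, Fin.insertNth_zero']
    have mp : MeasurePreserving e.symm
        ((volume : Measure ℝ).prod (volume : Measure (Fin n → ℝ)))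
        (volume : Measure (Fin (n+1) → ℝ)) := by
      have mp0 := (measurePreserving_piFinSuccAbove
        (fun _ : Fin (n+1) => (volume : Measure ℝ)) 0).symm
      simp only [← volume_pi] at mp0
      exact mp0
    set F : ℝ → ℝ≥0∞ := fun s => ∫⁻ x, f (e.symm (s, x)) with hF
    set G : ℝ → ℝ≥0∞ := fun t => ∫⁻ y, g (e.symm (t, y)) with hG
    set H : ℝ → ℝ≥0∞ := fun u => ∫⁻ z, h (e.symm (u, z)) with hH
    have hmeasF : Measurable fun p : ℝ × (Fin n → ℝ) => f (e.symm p) := hf.comp e.symm.measurable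
    have hmeasG : Measurable fun p : ℝ × (Fin n → ℝ) => g (e.symm p) := hg.comp e.symm.measurable
    have hmeasH : Measurable fun p : ℝ × (Fin n → ℝ) => h (e.symm p) := hh.comp e.symm.measurable
    have hFmeas : Measurable F := hmeasF.lintegral_prod_right'
    have hGmeas : Measurable G := hmeasG.lintegral_prod_right'
    have hHmeas : Measurable H := hmeasH.lintegral_prod_right'
    have hIf : ∫⁻ z, f z = ∫⁻ s, F s := by
      rw [← mp.lintegral_comp hf]
      exact lintegral_prod _ hmeasF.aemeasurable
    have hIg : ∫⁻ z, g z = ∫⁻ s, G s := by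
      rw [← mp.lintegral_comp hg]
      exact lintegral_prod _ hmeasG.aemeasurable
    have hIh : ∫⁻ z, h z = ∫⁻ s, H s := by
      rw [← mp.lintegral_comp hh]
      exact lintegral_prod _ hmeasH.aemeasurable
    set box := {y : Fin n → ℝ | ∀ i, |y i| ≤ R} with hbox
    set D := C * volume box with hD
    have hDne : D ≠ ⊤ := ENNReal.mul_ne_top hC (box_volume_lt_top n R).ne
    have hslice_bd : ∀ (k : (Fin (n+1) → ℝ) → ℝ≥0∞), (∀ x, k x ≤ C) →
        (∀ x, k x ≠ 0 → ∀ i, |x i| ≤ R) → ∀ s, (∫⁻ x, k (e.symm (s, x))) ≤ D := by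
      intro k hkC hkR s
      have hpt : ∀ x, k (e.symm (s, x)) ≤ box.indicator (fun _ => C) x := by
        intro x
        by_cases hx : x ∈ box
        · rw [indicator_of_mem hx]; exact hkC _
        · rw [indicator_of_notMem hx]
          have hzero : k (e.symm (s, x)) = 0 := by
            by_contra hne
            apply hx
            intro j
            have hcoords := hkR _ hne (Fin.succ j)
            rwa [hsymm, Fin.cons_succ] at hcoords
          simp [hzero]
      calc (∫⁻ x, k (e.symm (s, x))) ≤ ∫⁻ x, box.indicator (fun _ => C) x := lintegral_mono hpt
        _ = C * volume box := lintegral_indicator_const (box_measurable n R) C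
    have hFbdd : (⨆ s, F s) ≠ ⊤ :=
      ne_top_of_le_ne_top hDne (iSup_le (hslice_bd f hfC hfR))
    have hGbdd : (⨆ t, G t) ≠ ⊤ :=
      ne_top_of_le_ne_top hDne (iSup_le (hslice_bd g hgC hgR))
    have hcond1 : ∀ s t, F s ^ (1 - l) * G t ^ l ≤ H ((1 - l) * s + l * t) := by
      intro s t
      refine ih hl0 hl1 (fun x => f (e.symm (s, x))) (fun y => g (e.symm (t, y)))
        (fun z => h (e.symm ((1 - l) * s + l * t, z)))
        (hmeasF.comp measurable_prodMk_left) (hmeasG.comp measurable_prodMk_left)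
        (hmeasH.comp measurable_prodMk_left) C hC R ?_ ?_ ?_ ?_ ?_
      · intro x; exact hfC _
      · intro y; exact hgC _
      · intro x hne j
        have := hfR _ hne (Fin.succ j)
        rwa [hsymm, Fin.cons_succ] at this
      · intro y hne j
        have := hgR _ hne (Fin.succ j)
        rwa [hsymm, Fin.cons_succ] at this
      · intro x y
        have := hcond (e.symm (s, x)) (e.symm (t, y))
        rw [hsymm, hsymm, cons_combo] at this
        simpa [hsymm] using this
    calc (∫⁻ x, f x) ^ (1 - l) * (∫⁻ y, g y) ^ l
        = (∫⁻ s, F s) ^ (1 - l) * (∫⁻ t, G t) ^ l := by rw [hIf, hIg]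
      _ ≤ ∫⁻ u, H u := PL_one hl0 hl1 F G H hFmeas hGmeas hHmeas hFbdd hGbdd hcond1
      _ = ∫⁻ z, h z := hIh.symm


lemma vol_translate {n : ℕ} (a : Fin n → ℝ) (T : Set (Fin n → ℝ)) :
    volume ((a + ·) '' T) = volume T := by
  rw [show (a + ·) '' T = ((-a) + ·) ⁻¹' T from by
    ext z
    constructor
    · rintro ⟨t, ht, rfl⟩; simpa using ht
    · intro hz; exact ⟨-a + z, hz, add_neg_cancel_left a z⟩]
  exact measure_preimage_add volume (-a) T

lemma vol_smul {n : ℕ} (r : ℝ) (S : Set (Fin n → ℝ)) :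
    volume (r • S) = ENNReal.ofReal (|r| ^ n) * volume S := by
  have := Measure.addHaar_smul (volume : Measure (Fin n → ℝ)) r S
  rwa [show |r ^ Module.finrank ℝ (Fin n → ℝ)| = |r| ^ n from by
    rw [abs_pow, Module.finrank_pi ℝ]; simp] at this

theorem bm_compact (n : ℕ) (hn : 0 < n) (X Y : Set (Fin n → ℝ))
    (hX : IsCompact X) (hY : IsCompact Y) (hXne : X.Nonempty) (hYne : Y.Nonempty) :
    volume X ^ ((1:ℝ)/n) + volume Y ^ ((1:ℝ)/n) ≤ volume (X + Y) ^ ((1:ℝ)/n) := by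
  have hne : (0:ℝ) < 1/n := by positivity
  obtain ⟨x₀, hx₀⟩ := hXne
  obtain ⟨y₀, hy₀⟩ := hYne
  have hXfin : volume X ≠ ⊤ := hX.measure_lt_top.ne
  have hYfin : volume Y ≠ ⊤ := hY.measure_lt_top.ne
  have hXYfin : volume (X + Y) ≠ ⊤ := (hX.add hY).measure_lt_top.ne
  rcases eq_or_ne (volume X) 0 with hX0 | hX0
  · rw [hX0, ENNReal.zero_rpow_of_pos hne, zero_add]
    refine ENNReal.rpow_le_rpow ?_ hne.le
    calc volume Y = volume ((x₀ + ·) '' Y) := (vol_translate x₀ Y).symm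
      _ ≤ volume (X + Y) := measure_mono (by rintro _ ⟨y, hy, rfl⟩; exact add_mem_add hx₀ hy)
  rcases eq_or_ne (volume Y) 0 with hY0 | hY0
  · rw [hY0, ENNReal.zero_rpow_of_pos hne, add_zero]
    refine ENNReal.rpow_le_rpow ?_ hne.le
    calc volume X = volume ((y₀ + ·) '' X) := (vol_translate y₀ X).symm
      _ ≤ volume (X + Y) := measure_mono
          (by rintro _ ⟨x, hx, rfl⟩
              have := add_mem_add hx hy₀
              rwa [add_comm x y₀] at this)
  -- main case
  set vx := (volume X).toReal with hvx
  set vy := (volume Y).toReal with hvy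
  have hvxpos : 0 < vx := ENNReal.toReal_pos hX0 hXfin
  have hvypos : 0 < vy := ENNReal.toReal_pos hY0 hYfin
  set x := vx ^ ((1:ℝ)/n) with hx
  set y := vy ^ ((1:ℝ)/n) with hy
  have hxpos : 0 < x := Real.rpow_pos_of_pos hvxpos _
  have hypos : 0 < y := Real.rpow_pos_of_pos hvypos _
  set l := y / (x + y) with hl
  have hl0 : 0 < l := by positivity
  have hl1 : l < 1 := by
    rw [hl, div_lt_one (by positivity)]; linarith
  have h1l : 1 - l = x / (x + y) := by
    rw [hl]; field_simp; ring
  have h1lpos : (0:ℝ) < 1 - l := by linarith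
  -- powers recover volumes
  have hnne : (n:ℝ) ≠ 0 := Nat.cast_ne_zero.2 hn.ne'
  have hxn : x ^ (n:ℝ) = vx := by
    rw [hx, ← Real.rpow_mul hvxpos.le, one_div_mul_cancel hnne, Real.rpow_one]
  have hyn : y ^ (n:ℝ) = vy := by
    rw [hy, ← Real.rpow_mul hvypos.le, one_div_mul_cancel hnne, Real.rpow_one]
  -- bounds
  obtain ⟨r1, hr1⟩ := isBounded_iff_forall_norm_le.1 hX.isBounded
  obtain ⟨r2, hr2⟩ := isBounded_iff_forall_norm_le.1 hY.isBounded
  have hr1n : 0 ≤ r1 := le_trans (norm_nonneg x₀) (hr1 x₀ hx₀)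
  have hr2n : 0 ≤ r2 := le_trans (norm_nonneg y₀) (hr2 y₀ hy₀)
  set R := (1-l)⁻¹ * r1 + l⁻¹ * r2 with hR
  set X' := (1-l)⁻¹ • X with hX'def
  set Y' := l⁻¹ • Y with hY'def
  have hX'c : IsCompact X' := by
    rw [hX'def, ← Set.image_smul]; exact hX.image (continuous_const_smul _)
  have hY'c : IsCompact Y' := by
    rw [hY'def, ← Set.image_smul]; exact hY.image (continuous_const_smul _)
  have hX'm : MeasurableSet X' := hX'c.measurableSet
  have hY'm : MeasurableSet Y' := hY'c.measurableSet
  have hXYm : MeasurableSet (X + Y) := (hX.add hY).measurableSet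
  have hXcoord : ∀ z ∈ X', ∀ i, |z i| ≤ R := by
    rintro _ ⟨w, hw, rfl⟩ i
    have h1 : |((1-l)⁻¹ • w) i| = (1-l)⁻¹ * |w i| := by
      rw [Pi.smul_apply, smul_eq_mul, abs_mul, abs_of_pos (by positivity)]
    have h2 : |w i| ≤ r1 := le_trans (norm_le_pi_norm w i) (hr1 w hw)
    rw [h1, hR]
    have : (1-l)⁻¹ * |w i| ≤ (1-l)⁻¹ * r1 := by
      apply mul_le_mul_of_nonneg_left h2 (by positivity)
    have hpos : (0:ℝ) ≤ l⁻¹ * r2 := by positivity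
    linarith
  have hYcoord : ∀ z ∈ Y', ∀ i, |z i| ≤ R := by
    rintro _ ⟨w, hw, rfl⟩ i
    have h1 : |(l⁻¹ • w) i| = l⁻¹ * |w i| := by
      rw [Pi.smul_apply, smul_eq_mul, abs_mul, abs_of_pos (by positivity)]
    have h2 : |w i| ≤ r2 := le_trans (norm_le_pi_norm w i) (hr2 w hw)
    rw [h1, hR]
    have : l⁻¹ * |w i| ≤ l⁻¹ * r2 := by
      apply mul_le_mul_of_nonneg_left h2 (by positivity)
    have hpos : (0:ℝ) ≤ (1-l)⁻¹ * r1 := by positivity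
    linarith
  set fI := X'.indicator (1 : (Fin n → ℝ) → ℝ≥0∞) with hfI
  set gI := Y'.indicator (1 : (Fin n → ℝ) → ℝ≥0∞) with hgI
  set hI := (X + Y).indicator (1 : (Fin n → ℝ) → ℝ≥0∞) with hhI
  have hcond : ∀ u v, fI u ^ (1 - l) * gI v ^ l ≤ hI ((1 - l) • u + l • v) := by
    intro u v
    by_cases hu : u ∈ X'
    · by_cases hv : v ∈ Y'
      · rw [hfI, hgI, hhI, indicator_of_mem hu, indicator_of_mem hv]
        simp only [Pi.one_apply, ENNReal.one_rpow, mul_one]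
        rw [indicator_of_mem]
        · rw [Pi.one_apply]
        obtain ⟨w, hw, rfl⟩ := hu
        obtain ⟨z, hz, rfl⟩ := hv
        have e1 : (1 - l) • (1-l)⁻¹ • w = w := by
          rw [smul_smul, mul_inv_cancel₀ h1lpos.ne', one_smul]
        have e2 : l • l⁻¹ • z = z := by
          rw [smul_smul, mul_inv_cancel₀ hl0.ne', one_smul]
        rw [e1, e2]
        exact add_mem_add hw hz
      · rw [hgI, indicator_of_notMem hv, ENNReal.zero_rpow_of_pos hl0, mul_zero]
        exact zero_le
    · rw [hfI, indicator_of_notMem hu, ENNReal.zero_rpow_of_pos h1lpos, zero_mul]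
      exact zero_le
  have hPL := PL_pi n hl0 hl1 fI gI hI
    (measurable_const.indicator hX'm) (measurable_const.indicator hY'm)
    (measurable_const.indicator hXYm) 1 ENNReal.one_ne_top R
    (fun u => by by_cases hu : u ∈ X' <;> simp [hfI, indicator, hu])
    (fun u => by by_cases hu : u ∈ Y' <;> simp [hgI, indicator, hu])
    (fun u hne i => hXcoord u (by
      by_contra hmem
      exact hne (by rw [hfI, indicator_of_notMem hmem])) i)
    (fun u hne i => hYcoord u (by
      by_contra hmem
      exact hne (by rw [hgI, indicator_of_notMem hmem])) i)
    hcond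
  rw [hfI, hgI, hhI, lintegral_indicator_one hX'm, lintegral_indicator_one hY'm,
    lintegral_indicator_one hXYm] at hPL
  -- identify the scaled volumes
  have hvolX' : volume X' = ENNReal.ofReal ((x+y) ^ (n:ℝ)) := by
    rw [hX'def, vol_smul, abs_of_pos (by positivity : (0:ℝ) < (1-l)⁻¹),
      ← ENNReal.ofReal_toReal hXfin, ← hvx, ← ENNReal.ofReal_mul (by positivity)]
    congr 1
    rw [h1l, inv_div, ← Real.rpow_natCast ((x+y)/x) n, ← hxn,
      ← Real.mul_rpow (by positivity) hxpos.le, div_mul_cancel₀ _ hxpos.ne']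
  have hvolY' : volume Y' = ENNReal.ofReal ((x+y) ^ (n:ℝ)) := by
    rw [hY'def, vol_smul, abs_of_pos (by positivity : (0:ℝ) < l⁻¹),
      ← ENNReal.ofReal_toReal hYfin, ← hvy, ← ENNReal.ofReal_mul (by positivity)]
    congr 1
    rw [hl, inv_div, ← Real.rpow_natCast ((x+y)/y) n, ← hyn,
      ← Real.mul_rpow (by positivity) hypos.le, div_mul_cancel₀ _ hypos.ne']
  have hP : (0:ℝ) < (x+y) ^ (n:ℝ) := Real.rpow_pos_of_pos (by positivity) _
  have hmain : ENNReal.ofReal ((x+y) ^ (n:ℝ)) ≤ volume (X + Y) := by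
    calc ENNReal.ofReal ((x+y) ^ (n:ℝ))
        = ENNReal.ofReal (((x+y) ^ (n:ℝ)) ^ (1-l) * ((x+y) ^ (n:ℝ)) ^ l) := by
          rw [← Real.rpow_add hP, sub_add_cancel, Real.rpow_one]
      _ = (volume X') ^ (1-l) * (volume Y') ^ l := by
          rw [hvolX', hvolY', ENNReal.ofReal_rpow_of_pos hP, ENNReal.ofReal_rpow_of_pos hP,
            ENNReal.ofReal_mul (by positivity)]
      _ ≤ volume (X + Y) := hPL
  calc volume X ^ ((1:ℝ)/n) + volume Y ^ ((1:ℝ)/n)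
      = ENNReal.ofReal x + ENNReal.ofReal y := by
        rw [← ENNReal.ofReal_toReal hXfin, ← ENNReal.ofReal_toReal hYfin, ← hvx, ← hvy,
          ENNReal.ofReal_rpow_of_pos hvxpos, ENNReal.ofReal_rpow_of_pos hvypos, ← hx, ← hy]
    _ = ENNReal.ofReal ((x+y) ^ (n:ℝ)) ^ ((1:ℝ)/n) := by
        rw [ENNReal.ofReal_rpow_of_pos hP, ← Real.rpow_mul (by positivity : (0:ℝ) ≤ x + y),
          mul_one_div_cancel hnne, Real.rpow_one, ENNReal.ofReal_add hxpos.le hypos.le]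
    _ ≤ volume (X + Y) ^ ((1:ℝ)/n) := ENNReal.rpow_le_rpow hmain hne.le

-- auxiliary: compactness of the hypograph body
lemma body_compact {d : ℕ} (S : Set (Fin d → ℝ)) (φ : (Fin d → ℝ) → ℝ)
    (hS : IsCompact S) (hφ : ContinuousOn φ S) :
    IsCompact {p : ℝ × (Fin d → ℝ) | p.2 ∈ S ∧ p.1 ∈ Icc 0 (-φ p.2)} := by
  obtain ⟨M, hM⟩ := hS.exists_bound_of_continuousOn hφ
  have hclosed : IsClosed {p : ℝ × (Fin d → ℝ) | p.2 ∈ S ∧ p.1 ∈ Icc 0 (-φ p.2)} := by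
    have h1 : {p : ℝ × (Fin d → ℝ) | p.2 ∈ S ∧ p.1 ∈ Icc 0 (-φ p.2)}
        = (univ ×ˢ S) ∩ ((fun p : ℝ × (Fin d → ℝ) => (p.1, φ p.2)) ⁻¹'
            {q : ℝ × ℝ | 0 ≤ q.1 ∧ q.1 + q.2 ≤ 0}) := by
      ext p
      simp only [mem_setOf_eq, mem_inter_iff, mem_prod, mem_univ, true_and, mem_preimage,
        mem_Icc]
      constructor
      · rintro ⟨hp2, h0, h1⟩; exact ⟨hp2, h0, by linarith⟩
      · rintro ⟨hp2, h0, h1⟩; exact ⟨hp2, h0, by linarith⟩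
    rw [h1]
    apply ContinuousOn.preimage_isClosed_of_isClosed
    · exact continuousOn_fst.prodMk (hφ.comp continuousOn_snd fun p hp => hp.2)
    · exact isClosed_univ.prod hS.isClosed
    · exact (isClosed_le continuous_const continuous_fst).inter
        (isClosed_le (continuous_fst.add continuous_snd) continuous_const)
  refine IsCompact.of_isClosed_subset ((isCompact_Icc (a := (0:ℝ)) (b := M)).prod hS)
    hclosed ?_
  rintro p ⟨hp2, hp0, hp1⟩
  refine ⟨⟨hp0, hp1.trans (le_trans (neg_le_abs _) ?_)⟩, hp2⟩
  have := hM p.2 hp2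
  rwa [Real.norm_eq_abs] at this

-- auxiliary: the volume of the hypograph body
lemma body_vol {d : ℕ} (S : Set (Fin d → ℝ)) (φ : (Fin d → ℝ) → ℝ)
    (hSm : MeasurableSet S)
    (hKm : MeasurableSet {p : ℝ × (Fin d → ℝ) | p.2 ∈ S ∧ p.1 ∈ Icc 0 (-φ p.2)}) :
    volume {p : ℝ × (Fin d → ℝ) | p.2 ∈ S ∧ p.1 ∈ Icc 0 (-φ p.2)}
      = ∫⁻ x in S, ENNReal.ofReal (-φ x) := by
  rw [Measure.volume_eq_prod, Measure.prod_apply_symm hKm]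
  rw [← lintegral_indicator hSm (fun x => ENNReal.ofReal (-φ x))]
  congr 1
  funext x
  by_cases hx : x ∈ S
  · rw [indicator_of_mem hx]
    have : (fun t : ℝ => (t, x)) ⁻¹' {p : ℝ × (Fin d → ℝ) | p.2 ∈ S ∧ p.1 ∈ Icc 0 (-φ p.2)}
        = Icc 0 (-φ x) := by
      ext t; simp [hx]
    rw [this, Real.volume_Icc, sub_zero]
  · rw [indicator_of_notMem hx]
    have : (fun t : ℝ => (t, x)) ⁻¹' {p : ℝ × (Fin d → ℝ) | p.2 ∈ S ∧ p.1 ∈ Icc 0 (-φ p.2)}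
        = ∅ := by
      ext t; simp [hx]
    rw [this]; simp

/-- Brunn–Minkowski-type log-concavity: for compact convex bodies `A, B ⊆ ℝ^d` with
nonempty interior and nonpositive continuous convex functions `f` on `A`, `g` on `B`,
`h` on `A + B` with `h(x+y) ≤ f(x) + g(y)`, one has
`(∫_{A+B} -h)^{1/(d+1)} ≥ (∫_A -f)^{1/(d+1)} + (∫_B -g)^{1/(d+1)}`. -/
theorem brunn_minkowski_graphs (d : ℕ) (hd : 1 ≤ d) (A B : Set (Fin d → ℝ))
    (hAc : IsCompact A) (hAconv : Convex ℝ A) (hAint : (interior A).Nonempty)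
    (hBc : IsCompact B) (hBconv : Convex ℝ B) (hBint : (interior B).Nonempty)
    (f g h : (Fin d → ℝ) → ℝ)
    (hfconv : ConvexOn ℝ A f) (hfcont : ContinuousOn f A) (hf0 : ∀ x ∈ A, f x ≤ 0)
    (hgconv : ConvexOn ℝ B g) (hgcont : ContinuousOn g B) (hg0 : ∀ x ∈ B, g x ≤ 0)
    (hhconv : ConvexOn ℝ (A + B) h) (hhcont : ContinuousOn h (A + B))
    (hh0 : ∀ x ∈ A + B, h x ≤ 0)
    (hsum : ∀ x ∈ A, ∀ y ∈ B, h (x + y) ≤ f x + g y) :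
    (∫ x in A, (-f x)) ^ ((1 : ℝ) / (d + 1)) + (∫ x in B, (-g x)) ^ ((1 : ℝ) / (d + 1)) ≤
      (∫ x in A + B, (-h x)) ^ ((1 : ℝ) / (d + 1)) := by
  have hAm : MeasurableSet A := hAc.measurableSet
  have hBm : MeasurableSet B := hBc.measurableSet
  have hABc : IsCompact (A + B) := hAc.add hBc
  have hABm : MeasurableSet (A + B) := hABc.measurableSet
  obtain ⟨x₀, hx₀⟩ : A.Nonempty := hAint.mono interior_subset
  obtain ⟨y₀, hy₀⟩ : B.Nonempty := hBint.mono interior_subset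
  -- the bodies in ℝ × ℝ^d
  set Kf' : Set (ℝ × (Fin d → ℝ)) := {p | p.2 ∈ A ∧ p.1 ∈ Icc 0 (-f p.2)} with hKf'
  set Kg' : Set (ℝ × (Fin d → ℝ)) := {p | p.2 ∈ B ∧ p.1 ∈ Icc 0 (-g p.2)} with hKg'
  set Kh' : Set (ℝ × (Fin d → ℝ)) := {p | p.2 ∈ A + B ∧ p.1 ∈ Icc 0 (-h p.2)} with hKh'
  have hKf'c : IsCompact Kf' := body_compact A f hAc hfcont
  have hKg'c : IsCompact Kg' := body_compact B g hBc hgcont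
  have hKh'c : IsCompact Kh' := body_compact (A + B) h hABc hhcont
  -- transfer to (Fin (d+1) → ℝ)
  set e := MeasurableEquiv.piFinSuccAbove (fun _ : Fin (d+1) => ℝ) 0 with he
  have hsymm : ∀ (s : ℝ) (x : Fin d → ℝ), e.symm (s, x) = (Fin.cons s x : Fin (d+1) → ℝ) := by
    intro s x
    show (Fin.insertNthEquiv (fun _ => ℝ) 0) (s, x) = Fin.cons s x
    simp [Fin.insertNthEquiv, Fin.insertNth_zero']
  have mp : MeasurePreserving e (volume : Measure (Fin (d+1) → ℝ))
      ((volume : Measure ℝ).prod (volume : Measure (Fin d → ℝ))) := by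
    have mp0 := measurePreserving_piFinSuccAbove (fun _ : Fin (d+1) => (volume : Measure ℝ)) 0
    simp only [← volume_pi] at mp0
    exact mp0
  have hconsCont : Continuous (fun p : ℝ × (Fin d → ℝ) => (Fin.cons p.1 p.2 : Fin (d+1) → ℝ)) :=
    continuous_pi fun i => Fin.cases (by simpa using continuous_fst)
      (fun j => by simp only [Fin.cons_succ]; exact (continuous_apply j).comp continuous_snd) i
  have hfun : ⇑e.symm = (fun p : ℝ × (Fin d → ℝ) => (Fin.cons p.1 p.2 : Fin (d+1) → ℝ)) :=
    funext fun p => hsymm p.1 p.2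
  have epre : ∀ (K : Set (ℝ × (Fin d → ℝ))),
      e ⁻¹' K = (fun p : ℝ × (Fin d → ℝ) => (Fin.cons p.1 p.2 : Fin (d+1) → ℝ)) '' K := by
    intro K
    rw [← hfun]
    have h2 := MeasurableEquiv.preimage_symm e.symm K
    rw [MeasurableEquiv.symm_symm] at h2
    exact h2
  set Kf := e ⁻¹' Kf' with hKf
  set Kg := e ⁻¹' Kg' with hKg
  set Kh := e ⁻¹' Kh' with hKh
  have hKfc : IsCompact Kf := by rw [hKf, epre]; exact hKf'c.image hconsCont
  have hKgc : IsCompact Kg := by rw [hKg, epre]; exact hKg'c.image hconsCont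
  have hKhc : IsCompact Kh := by rw [hKh, epre]; exact hKh'c.image hconsCont
  have hKfne : Kf.Nonempty := by
    refine ⟨e.symm (0, x₀), ?_⟩
    show e (e.symm (0, x₀)) ∈ Kf'
    rw [e.apply_symm_apply]
    exact ⟨hx₀, mem_Icc.2 ⟨le_refl 0, show (0:ℝ) ≤ -f x₀ by linarith [hf0 x₀ hx₀]⟩⟩
  have hKgne : Kg.Nonempty := by
    refine ⟨e.symm (0, y₀), ?_⟩
    show e (e.symm (0, y₀)) ∈ Kg'
    rw [e.apply_symm_apply]
    exact ⟨hy₀, mem_Icc.2 ⟨le_refl 0, show (0:ℝ) ≤ -g y₀ by linarith [hg0 y₀ hy₀]⟩⟩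
  -- the sum of the bodies is contained in the body of h
  have hsummem : Kf + Kg ⊆ Kh := by
    rintro _ ⟨u, hu, v, hv, rfl⟩
    have hadd : e (u + v) = e u + e v := by
      have h1 : ∀ w : Fin (d+1) → ℝ, e w = (w 0, fun j => w ((0 : Fin (d+1)).succAbove j)) := by
        intro w
        rfl
      rw [h1, h1, h1]
      ext <;> simp
    show e (u + v) ∈ Kh'
    rw [hadd]
    have hu' : e u ∈ Kf' := hu
    have hv' : e v ∈ Kg' := hv
    obtain ⟨hu1, hu2, hu3⟩ := hu'
    obtain ⟨hv1, hv2, hv3⟩ := hv'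
    refine ⟨add_mem_add hu1 hv1, ?_, ?_⟩
    · exact add_nonneg hu2 hv2
    · have := hsum _ hu1 _ hv1
      show (e u).1 + (e v).1 ≤ -h ((e u).2 + (e v).2)
      linarith
  -- volumes
  have hVf : volume Kf = ∫⁻ x in A, ENNReal.ofReal (-f x) := by
    rw [hKf, mp.measure_preimage hKf'c.measurableSet.nullMeasurableSet]
    exact body_vol A f hAm hKf'c.measurableSet
  have hVg : volume Kg = ∫⁻ x in B, ENNReal.ofReal (-g x) := by
    rw [hKg, mp.measure_preimage hKg'c.measurableSet.nullMeasurableSet]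
    exact body_vol B g hBm hKg'c.measurableSet
  have hVh : volume Kh = ∫⁻ x in A + B, ENNReal.ofReal (-h x) := by
    rw [hKh, mp.measure_preimage hKh'c.measurableSet.nullMeasurableSet]
    exact body_vol (A + B) h hABm hKh'c.measurableSet
  -- Brunn–Minkowski
  have bm := bm_compact (d+1) (Nat.succ_pos d) Kf Kg hKfc hKgc hKfne hKgne
  have bm2 : volume Kf ^ ((1:ℝ)/(d+1)) + volume Kg ^ ((1:ℝ)/(d+1))
      ≤ volume Kh ^ ((1:ℝ)/(d+1)) := by
    refine le_trans ?_ (ENNReal.rpow_le_rpow (measure_mono hsummem) (by positivity))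
    exact_mod_cast bm
  -- convert to real integrals
  have hbochner : ∀ (S : Set (Fin d → ℝ)) (φ : (Fin d → ℝ) → ℝ), MeasurableSet S →
      ContinuousOn φ S → (∀ x ∈ S, φ x ≤ 0) →
      ∫ x in S, (-φ x) = (∫⁻ x in S, ENNReal.ofReal (-φ x)).toReal := by
    intro S φ hSm hScont hneg
    rw [integral_eq_lintegral_of_nonneg_ae]
    · exact (ae_restrict_iff' hSm).2 (Filter.Eventually.of_forall fun x hx => by
        simp only [Pi.zero_apply, neg_nonneg]; exact hneg x hx)
    · exact (hScont.neg).aestronglyMeasurable hSm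
  rw [hbochner A f hAm hfcont hf0, hbochner B g hBm hgcont hg0,
    hbochner (A+B) h hABm hhcont hh0]
  have hfinf : volume Kf ≠ ⊤ := hKfc.measure_lt_top.ne
  have hfing : volume Kg ≠ ⊤ := hKgc.measure_lt_top.ne
  have hfinh : volume Kh ≠ ⊤ := hKhc.measure_lt_top.ne
  have hexp : ((1:ℝ)/(d+1)) = (1:ℝ)/((d+1 : ℕ) : ℝ) := by push_cast; ring
  have hexp0 : (0:ℝ) ≤ (1:ℝ)/(d+1) := by positivity
  rw [← hVf, ← hVg, ← hVh]
  rw [ENNReal.toReal_rpow, ENNReal.toReal_rpow, ENNReal.toReal_rpow]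
  rw [← ENNReal.toReal_add (ENNReal.rpow_ne_top_of_nonneg hexp0 hfinf)
    (ENNReal.rpow_ne_top_of_nonneg hexp0 hfing)]
  refine ENNReal.toReal_mono (ENNReal.rpow_ne_top_of_nonneg hexp0 hfinh) ?_
  rw [hexp]
  exact_mod_cast bm2
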